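/- For every positive integer N there exists a bijection g from the set of partitions with all parts ≤ N onto the Cartesian product of the set of strict partitions with all parts ≤ N and the set of partitions with all parts ≤ N in which every part occurs an even number of times, such that whenever g(λ) = (μ, ν): ℓ(λ) = ℓ(μ) + ℓ(ν), and each of the four statistics Σ_{i≥1}⌈λ_{2i−1}/2⌉, Σ_{i≥1}⌊λ_{2i−1}/2⌋, Σ_{i≥1}⌈λ_{2i}/2⌉, Σ_{i≥1}⌊λ_{2i}/2⌋ of λ equals the sum of the corresponding statistics of μ and of ν (equivalently, ω(λ) = ω(μ)·ω(ν) for all a,b,c,d in any commutative ring). -/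

import Mathlib

open scoped BigOperators

/-- A partition: a weakly decreasing sequence of nonnegative integers (0-indexed:
`parts i` is λ_{i+1}) with finitely many nonzero terms. -/
structure IntPartition where
  parts : ℕ → ℕ
  antitone : Antitone parts
  fin_support : ∃ N, ∀ n, N ≤ n → parts n = 0

namespace IntPartition

/-- Σ_{i≥1} ⌈λ_{2i-1}/2⌉ (odd-indexed rows, 1-based; ceiling). -/
noncomputable def statA (l : IntPartition) : ℕ := ∑ᶠ i : ℕ, (l.parts (2 * i) + 1) / 2
/-- Σ_{i≥1} ⌊λ_{2i-1}/2⌋. -/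
noncomputable def statB (l : IntPartition) : ℕ := ∑ᶠ i : ℕ, l.parts (2 * i) / 2
/-- Σ_{i≥1} ⌈λ_{2i}/2⌉. -/
noncomputable def statC (l : IntPartition) : ℕ := ∑ᶠ i : ℕ, (l.parts (2 * i + 1) + 1) / 2
/-- Σ_{i≥1} ⌊λ_{2i}/2⌋. -/
noncomputable def statD (l : IntPartition) : ℕ := ∑ᶠ i : ℕ, l.parts (2 * i + 1) / 2

/-- ℓ(λ): the number of nonzero parts. -/
noncomputable def length (l : IntPartition) : ℕ := Set.ncard (Function.support l.parts)

/-- |λ|: the sum of all parts. -/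
noncomputable def size (l : IntPartition) : ℕ := ∑ᶠ i : ℕ, l.parts i

/-- A partition is strict if its nonzero parts are pairwise distinct. -/
def Strict (l : IntPartition) : Prop := ∀ i, l.parts (i + 1) ≠ 0 → l.parts (i + 1) < l.parts i

/-- The Andrews–Stanley four-parameter weight ω(λ). -/
noncomputable def weight {R : Type*} [CommRing R] (a b c d : R) (l : IntPartition) : R :=
  a ^ l.statA * b ^ l.statB * c ^ l.statC * d ^ l.statD

/-- O(λ): the number of odd parts. -/
noncomputable def oddParts (l : IntPartition) : ℕ := Set.ncard {i : ℕ | Odd (l.parts i)}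

/-- O(λ'): the number of odd parts of the conjugate partition. -/
noncomputable def conjOddParts (l : IntPartition) : ℕ :=
  Set.ncard {j : ℕ | Odd (Set.ncard {i : ℕ | j + 1 ≤ l.parts i})}

end IntPartition

/-- The q-shifted factorial (x;q)_n. -/
def poch {R : Type*} [CommRing R] (x q : R) (n : ℕ) : R :=
  ∏ k ∈ Finset.range n, (1 - x * q ^ k)

/-- The infinite q-shifted factorial (x;q)_∞ (as an infinite product of reals). -/
noncomputable def pochInf (x q : ℝ) : ℝ := ∏' k : ℕ, (1 - x * q ^ k)

/-- The basic hypergeometric series ₂φ₁(α,β;γ;q,w). -/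
noncomputable def phi21 (α β γ q w : ℝ) : ℝ :=
  ∑' n : ℕ, poch α q n * poch β q n / (poch q q n * poch γ q n) * w ^ n

/-- Absolute convergence of the ₂φ₁ series. -/
def phi21Summable (α β γ q w : ℝ) : Prop :=
  Summable (fun n : ℕ => poch α q n * poch β q n / (poch q q n * poch γ q n) * w ^ n)

/-- The Gaussian binomial coefficient [N choose k]_q. -/
noncomputable def gauss {K : Type*} [Field K] (q : K) (N k : ℕ) : K :=
  poch q q N / (poch q q k * poch q q (N - k))

/-- Ψ_N(a,b,c,d;z): the generating function of strict partitions with parts ≤ N. -/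
noncomputable def Psi {R : Type*} [CommRing R] (a b c d z : R) (N : ℕ) : R :=
  ∑ᶠ μ : {μ : IntPartition // μ.Strict ∧ μ.parts 0 ≤ N},
    IntPartition.weight a b c d μ.1 * z ^ μ.1.length

namespace BouletAux
open Finset

lemma nat_eq_of_lt_iff {a b : ℕ} (h : ∀ i, i < a ↔ i < b) : a = b := by
  have h1 := h a; have h2 := h b; omega

/-- number of parts that are `≥ k`. -/
noncomputable def cnt (l : IntPartition) (k : ℕ) : ℕ := Set.ncard {i | k ≤ l.parts i}

lemma finite_ge (l : IntPartition) {k : ℕ} (hk : 1 ≤ k) : {i | k ≤ l.parts i}.Finite := by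
  obtain ⟨B, hB⟩ := l.fin_support
  apply Set.Finite.subset (Set.finite_Iio B)
  intro i hi
  simp only [Set.mem_setOf_eq] at hi
  simp only [Set.mem_Iio]
  by_contra h
  push_neg at h
  rw [hB i h] at hi
  omega

lemma ncard_Iio (n : ℕ) : (Set.Iio n).ncard = n := by
  have : (Set.Iio n : Set ℕ) = ↑(Finset.range n) := by ext; simp
  rw [this, Set.ncard_coe_finset, Finset.card_range]

lemma ncard_Iic (n : ℕ) : (Set.Iic n).ncard = n + 1 := by
  have : (Set.Iic n : Set ℕ) = ↑(Finset.range (n + 1)) := by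
    ext; simp [Nat.lt_succ_iff]
  rw [this, Set.ncard_coe_finset, Finset.card_range]

lemma lt_cnt_iff (l : IntPartition) {k : ℕ} (hk : 1 ≤ k) (i : ℕ) :
    i < cnt l k ↔ k ≤ l.parts i := by
  have hfin := finite_ge l hk
  constructor
  · intro h
    by_contra hc
    push_neg at hc
    have hsub : {j | k ≤ l.parts j} ⊆ Set.Iio i := by
      intro j hj
      simp only [Set.mem_setOf_eq] at hj
      simp only [Set.mem_Iio]
      by_contra hji
      push_neg at hji
      have := l.antitone hji
      omega
    have := Set.ncard_le_ncard hsub (Set.finite_Iio i)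
    rw [ncard_Iio] at this
    unfold cnt at h
    omega
  · intro h
    have hsub : Set.Iic i ⊆ {j | k ≤ l.parts j} := by
      intro j hj
      simp only [Set.mem_Iic] at hj
      simp only [Set.mem_setOf_eq]
      exact le_trans h (l.antitone hj)
    have := Set.ncard_le_ncard hsub hfin
    rw [ncard_Iic] at this
    unfold cnt
    omega

lemma cnt_mono (l : IntPartition) {a b : ℕ} (ha : 1 ≤ a) (hab : a ≤ b) :
    cnt l b ≤ cnt l a := by
  by_contra h
  push_neg at h
  have h1 : cnt l a < cnt l b := h
  have hb : 1 ≤ b := le_trans ha hab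
  have h2 : b ≤ l.parts (cnt l a) := (lt_cnt_iff l hb _).mp h1
  have h3 : a ≤ l.parts (cnt l a) := le_trans hab h2
  have := (lt_cnt_iff l ha (cnt l a)).mpr h3
  omega

lemma cnt_eq_zero (l : IntPartition) {k : ℕ} (h : l.parts 0 < k) : cnt l k = 0 := by
  have : {i | k ≤ l.parts i} = (∅ : Set ℕ) := by
    ext i
    simp only [Set.mem_setOf_eq, Set.mem_empty_iff_false, iff_false]
    intro hi
    have := l.antitone (Nat.zero_le i)
    omega
  unfold cnt
  rw [this, Set.ncard_empty]

lemma length_eq_cnt (l : IntPartition) : l.length = cnt l 1 := by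
  unfold IntPartition.length cnt
  congr 1
  ext i
  simp [Function.mem_support, Nat.one_le_iff_ne_zero]

/-- multiplicity of `k` as a part. -/
noncomputable def mlt (l : IntPartition) (k : ℕ) : ℕ := cnt l k - cnt l (k + 1)

lemma ncard_parts_eq (l : IntPartition) {k : ℕ} (hk : 1 ≤ k) :
    Set.ncard {i | l.parts i = k} = mlt l k := by
  have h1 : {i | l.parts i = k} = ↑(Finset.Ico (cnt l (k+1)) (cnt l k)) := by
    ext i
    simp only [Set.mem_setOf_eq, Finset.coe_Ico, Set.mem_Ico]
    have e1 := lt_cnt_iff l hk i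
    have e2 := lt_cnt_iff l (by omega : 1 ≤ k + 1) i
    omega
  rw [h1, Set.ncard_coe_finset, Nat.card_Ico]
  rfl

lemma card_parity (r : ℕ) (hr : r ≤ 1) (p : ℕ) :
    ((Icc 1 p).filter (fun j => j % 2 = r)).card = (p + r) / 2 := by
  induction p with
  | zero =>
    simp
    omega
  | succ n ih =>
    have hins : Icc 1 (n + 1) = insert (n + 1) (Icc 1 n) := by
      ext x; simp [mem_Icc, mem_insert]; omega
    rw [hins, Finset.filter_insert]
    by_cases h : (n + 1) % 2 = r
    · rw [if_pos h, Finset.card_insert_of_notMem (by simp [mem_filter])]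
      omega
    · rw [if_neg h, ih]
      omega

lemma filter_range_card {B c o : ℕ} (hc : c ≤ B) (ho : o ≤ 1) :
    ((range B).filter (fun i => 2 * i + o < c)).card = (c + 1 - o) / 2 := by
  have : (range B).filter (fun i => 2 * i + o < c) = range ((c + 1 - o) / 2) := by
    ext i
    simp only [mem_filter, mem_range]
    omega
  rw [this, card_range]

lemma stat_core (l : IntPartition) (N : ℕ) (hl : l.parts 0 ≤ N) (o r : ℕ)
    (ho : o ≤ 1) (hr : r ≤ 1) :
    (∑ᶠ i : ℕ, (l.parts (2 * i + o) + r) / 2)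
      = ∑ j ∈ (Icc 1 N).filter (fun j => j % 2 = r), (cnt l j + 1 - o) / 2 := by
  set L := cnt l 1 with hL
  have hsupp : Function.support (fun i => (l.parts (2 * i + o) + r) / 2) ⊆ ↑(range L) := by
    intro i hi
    simp only [Function.mem_support] at hi
    have h1 : 1 ≤ l.parts (2 * i + o) := by omega
    have h2 := (lt_cnt_iff l le_rfl (2 * i + o)).mpr h1
    simp only [coe_range, Set.mem_Iio]
    omega
  rw [finsum_eq_sum_of_support_subset _ hsupp]
  have step1 : ∀ i ∈ range L, (l.parts (2 * i + o) + r) / 2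
      = ∑ j ∈ (Icc 1 N).filter (fun j => j % 2 = r),
          (if j ≤ l.parts (2 * i + o) then 1 else 0) := by
    intro i _
    set p := l.parts (2 * i + o) with hp
    have hpN : p ≤ N := le_trans (l.antitone (Nat.zero_le _)) hl
    have e1 : ((Icc 1 p).filter (fun j => j % 2 = r)).card = (p + r) / 2 :=
      card_parity r hr p
    have e2 : (Icc 1 p).filter (fun j => j % 2 = r)
        = ((Icc 1 N).filter (fun j => j % 2 = r)).filter (fun j => j ≤ p) := by
      ext j
      simp only [mem_filter, mem_Icc]
      omega
    rw [← e1, e2, Finset.card_filter]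
  rw [Finset.sum_congr rfl step1, Finset.sum_comm]
  apply Finset.sum_congr rfl
  intro j hj
  simp only [mem_filter, mem_Icc] at hj
  have hj1 : 1 ≤ j := hj.1.1
  have hiff : ∀ i : ℕ, (j ≤ l.parts (2 * i + o)) ↔ 2 * i + o < cnt l j :=
    fun i => (lt_cnt_iff l hj1 (2 * i + o)).symm
  have hcL : cnt l j ≤ L := cnt_mono l le_rfl hj1
  calc (∑ i ∈ range L, if j ≤ l.parts (2 * i + o) then 1 else 0)
      = ((range L).filter (fun i => 2 * i + o < cnt l j)).card := by
        rw [Finset.card_filter]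
        exact Finset.sum_congr rfl (fun i _ => by rw [if_congr (hiff i) rfl rfl])
    _ = (cnt l j + 1 - o) / 2 := filter_range_card hcL ho

lemma statA_eq (l : IntPartition) (N : ℕ) (hl : l.parts 0 ≤ N) :
    l.statA = ∑ j ∈ (Icc 1 N).filter (fun j => j % 2 = 1), (cnt l j + 1) / 2 := by
  have h := stat_core l N hl 0 1 (by omega) (by omega)
  simp only [add_zero, Nat.sub_zero] at h
  exact h

lemma statB_eq (l : IntPartition) (N : ℕ) (hl : l.parts 0 ≤ N) :
    l.statB = ∑ j ∈ (Icc 1 N).filter (fun j => j % 2 = 0), (cnt l j + 1) / 2 := by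
  have h := stat_core l N hl 0 0 (by omega) (by omega)
  simp only [add_zero, Nat.sub_zero] at h
  exact h

lemma statC_eq (l : IntPartition) (N : ℕ) (hl : l.parts 0 ≤ N) :
    l.statC = ∑ j ∈ (Icc 1 N).filter (fun j => j % 2 = 1), cnt l j / 2 := by
  have h := stat_core l N hl 1 1 (by omega) (by omega)
  simp only [Nat.add_sub_cancel] at h
  exact h

lemma statD_eq (l : IntPartition) (N : ℕ) (hl : l.parts 0 ≤ N) :
    l.statD = ∑ j ∈ (Icc 1 N).filter (fun j => j % 2 = 0), cnt l j / 2 := by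
  have h := stat_core l N hl 1 0 (by omega) (by omega)
  simp only [add_zero, Nat.add_sub_cancel] at h
  exact h

/-- build a partition from a "count vector" supported on `[1,N]`. -/
noncomputable def mk (N : ℕ) (d : ℕ → ℕ) : IntPartition where
  parts i := ((Icc 1 N).filter (fun k => i < d k)).card
  antitone := by
    intro i j hij
    apply Finset.card_le_card
    intro k hk
    simp only [mem_filter] at hk ⊢
    exact ⟨hk.1, by omega⟩
  fin_support := by
    refine ⟨∑ k ∈ Icc 1 N, d k, fun n hn => ?_⟩
    have : (Icc 1 N).filter (fun k => n < d k) = ∅ := by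
      rw [Finset.filter_eq_empty_iff]
      intro k hk
      have := Finset.single_le_sum (f := d) (fun a _ => Nat.zero_le _) hk
      omega
    simp [this]

lemma mk_parts_le (N : ℕ) (d : ℕ → ℕ) (i : ℕ) : (mk N d).parts i ≤ N := by
  have h := Finset.card_filter_le (Icc 1 N) (fun k => i < d k)
  simpa [mk, Nat.card_Icc] using h

lemma dmono' {d : ℕ → ℕ} (hmono : ∀ k, 1 ≤ k → d (k + 1) ≤ d k) :
    ∀ a b, 1 ≤ a → a ≤ b → d b ≤ d a := by
  intro a b ha hab
  induction b with
  | zero => omega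
  | succ n ih =>
    rcases Nat.lt_or_ge a (n + 1) with h | h
    · exact le_trans (hmono n (by omega)) (ih (by omega))
    · have : a = n + 1 := by omega
      rw [this]

lemma mk_le_iff (N : ℕ) (d : ℕ → ℕ) (hmono : ∀ k, 1 ≤ k → d (k + 1) ≤ d k)
    {k : ℕ} (hk : 1 ≤ k) (hkN : k ≤ N) (i : ℕ) :
    k ≤ (mk N d).parts i ↔ i < d k := by
  set s := (Icc 1 N).filter (fun j => i < d j) with hs
  have hdown : ∀ a b, 1 ≤ a → a ≤ b → b ∈ s → a ∈ s := by
    intro a b ha hab hb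
    simp only [hs, mem_filter, mem_Icc] at hb ⊢
    refine ⟨⟨ha, le_trans hab hb.1.2⟩, ?_⟩
    have := dmono' hmono a b ha hab
    omega
  have key : ∀ j, j ∈ s ↔ 1 ≤ j ∧ j ≤ s.card := by
    intro j
    constructor
    · intro hj
      have hj1 : 1 ≤ j := by
        simp only [hs, mem_filter, mem_Icc] at hj; exact hj.1.1
      refine ⟨hj1, ?_⟩
      have hsub : Icc 1 j ⊆ s := by
        intro x hx
        simp only [mem_Icc] at hx
        exact hdown x j hx.1 hx.2 hj
      have := Finset.card_le_card hsub
      simpa [Nat.card_Icc] using this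
    · rintro ⟨hj1, hjc⟩
      by_contra hj
      have hsub : s ⊆ Icc 1 (j - 1) := by
        intro x hx
        have hx1 : 1 ≤ x := by
          simp only [hs, mem_filter, mem_Icc] at hx; exact hx.1.1
        simp only [mem_Icc]
        refine ⟨hx1, ?_⟩
        by_contra hxj
        push_neg at hxj
        exact hj (hdown j x hj1 (by omega) hx)
      have := Finset.card_le_card hsub
      simp only [Nat.card_Icc] at this
      omega
  have hparts : (mk N d).parts i = s.card := rfl
  rw [hparts]
  constructor
  · intro h
    have : k ∈ s := (key k).mpr ⟨hk, h⟩
    simp only [hs, mem_filter] at this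
    exact this.2
  · intro h
    have : k ∈ s := by
      simp only [hs, mem_filter, mem_Icc]
      exact ⟨⟨hk, hkN⟩, h⟩
    exact ((key k).mp this).2

lemma mk_cnt (N : ℕ) (d : ℕ → ℕ) (hmono : ∀ k, 1 ≤ k → d (k + 1) ≤ d k)
    (hzero : ∀ k, N < k → d k = 0) {k : ℕ} (hk : 1 ≤ k) :
    cnt (mk N d) k = d k := by
  rcases le_or_gt k N with hkN | hkN
  · apply nat_eq_of_lt_iff
    intro i
    rw [lt_cnt_iff _ hk, mk_le_iff N d hmono hk hkN]
  · rw [hzero k hkN]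
    apply cnt_eq_zero
    have := mk_parts_le N d 0
    omega

lemma sum_mlt_aux (l : IntPartition) {k : ℕ} (hk : 1 ≤ k) :
    ∀ a, k ≤ a + 1 → ∑ j ∈ Icc k a, mlt l j + cnt l (a + 1) = cnt l k := by
  intro a
  induction a with
  | zero =>
    intro h
    have : k = 1 := by omega
    subst this
    simp
  | succ n ih =>
    intro h
    rcases le_or_gt k (n + 1) with h1 | h1
    · have hins : Icc k (n + 1) = insert (n + 1) (Icc k n) := by
        ext x; simp [mem_Icc, mem_insert]; omega
      rw [hins, Finset.sum_insert (by simp [mem_Icc])]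
      have hmlt : mlt l (n + 1) = cnt l (n + 1) - cnt l (n + 2) := rfl
      have hanti : cnt l (n + 2) ≤ cnt l (n + 1) := cnt_mono l (by omega) (by omega)
      have := ih h1
      have hnn : cnt l (n + 1 + 1) = cnt l (n + 2) := by norm_num
      omega
    · have : Icc k (n + 1) = ∅ := by
        apply Finset.Icc_eq_empty
        omega
      rw [this]
      have : k = n + 2 := by omega
      simp [this]

lemma sum_mlt (l : IntPartition) {N k : ℕ} (hl : l.parts 0 ≤ N) (hk : 1 ≤ k) :
    ∑ j ∈ Icc k N, mlt l j = cnt l k := by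
  rcases le_or_gt k N with hkN | hkN
  · have h := sum_mlt_aux l hk N (by omega)
    have : cnt l (N + 1) = 0 := cnt_eq_zero l (by omega)
    omega
  · have h1 : Icc k N = ∅ := Finset.Icc_eq_empty (by omega)
    have h2 : cnt l k = 0 := cnt_eq_zero l (by omega)
    rw [h1, h2]
    simp

/-- count vector of the strict component. -/
noncomputable def cmu (l : IntPartition) (N k : ℕ) : ℕ :=
  ((Icc k N).filter (fun j => mlt l j % 2 = 1)).card

/-- count vector of the even component. -/
noncomputable def cnu (l : IntPartition) (N k : ℕ) : ℕ :=
  ∑ j ∈ Icc k N, 2 * (mlt l j / 2)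

lemma cmu_mono (l : IntPartition) (N : ℕ) : ∀ k, 1 ≤ k → cmu l N (k + 1) ≤ cmu l N k := by
  intro k _
  apply Finset.card_le_card
  apply Finset.monotone_filter_left
  exact Finset.Icc_subset_Icc_left (by omega)

lemma cnu_mono (l : IntPartition) (N : ℕ) : ∀ k, 1 ≤ k → cnu l N (k + 1) ≤ cnu l N k := by
  intro k _
  apply Finset.sum_le_sum_of_subset
  exact Finset.Icc_subset_Icc_left (by omega)

lemma cmu_zero (l : IntPartition) (N : ℕ) : ∀ k, N < k → cmu l N k = 0 := by
  intro k hk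
  unfold cmu
  rw [Finset.Icc_eq_empty (by omega)]
  simp

lemma cnu_zero (l : IntPartition) (N : ℕ) : ∀ k, N < k → cnu l N k = 0 := by
  intro k hk
  unfold cnu
  rw [Finset.Icc_eq_empty (by omega)]
  simp

lemma cnu_even (l : IntPartition) (N k : ℕ) : Even (cnu l N k) := by
  unfold cnu
  rw [← Finset.mul_sum]
  exact ⟨_, by ring⟩

lemma cmu_add_cnu (l : IntPartition) {N k : ℕ} (hl : l.parts 0 ≤ N) (hk : 1 ≤ k) :
    cmu l N k + cnu l N k = cnt l k := by
  unfold cmu cnu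
  rw [Finset.card_filter, ← Finset.sum_add_distrib]
  rw [← sum_mlt l hl hk]
  apply Finset.sum_congr rfl
  intro j _
  by_cases h : mlt l j % 2 = 1 <;> simp [h] <;> omega

lemma icc_insert {k N : ℕ} (h1 : 1 ≤ k) (h2 : k ≤ N) :
    Icc k N = insert k (Icc (k + 1) N) := by
  ext x; simp [mem_Icc, mem_insert]; omega

lemma cmu_succ_le (l : IntPartition) (N k : ℕ) : cmu l N k ≤ cmu l N (k + 1) + 1 := by
  rcases le_or_gt k N with h | h
  · rcases le_or_gt 1 k with h1 | h1
    · unfold cmu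
      rw [icc_insert h1 h, Finset.filter_insert]
      split
      · exact le_trans (Finset.card_insert_le _ _) (by omega)
      · omega
    · have hk0 : k = 0 := by omega
      subst hk0
      show cmu l N 0 ≤ cmu l N 1 + 1
      unfold cmu
      have : Icc 0 N = insert 0 (Icc 1 N) := by
        ext x; simp [mem_Icc, mem_insert]; omega
      rw [this, Finset.filter_insert]
      split
      · exact le_trans (Finset.card_insert_le _ _) (by omega)
      · omega
  · rw [cmu_zero l N k h]
    omega

lemma cnu_split (l : IntPartition) {N k : ℕ} (h1 : 1 ≤ k) (h2 : k ≤ N) :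
    cnu l N k = 2 * (mlt l k / 2) + cnu l N (k + 1) := by
  unfold cnu
  rw [icc_insert h1 h2, Finset.sum_insert (by simp [mem_Icc])]

lemma strict_mlt {l : IntPartition} (hs : l.Strict) {k : ℕ} (hk : 1 ≤ k) :
    mlt l k ≤ 1 := by
  unfold mlt
  by_contra h
  push_neg at h
  set t := cnt l (k + 1) with ht
  have h2 : t + 1 < cnt l k := by omega
  have h3 : k ≤ l.parts (t + 1) := (lt_cnt_iff l hk _).mp h2
  have h4 : ¬ (t < cnt l (k + 1)) := by omega
  rw [lt_cnt_iff l (by omega)] at h4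
  push_neg at h4
  have h5 : l.parts (t + 1) ≤ l.parts t := l.antitone (by omega)
  have h6 : l.parts (t + 1) ≠ 0 := by omega
  have := hs t h6
  omega

lemma parts_eq (l : IntPartition) {N : ℕ} (hl : l.parts 0 ≤ N) (i : ℕ) :
    l.parts i = ((Icc 1 N).filter (fun k => i < cnt l k)).card := by
  have : (Icc 1 N).filter (fun k => i < cnt l k) = Icc 1 (l.parts i) := by
    ext j
    simp only [mem_filter, mem_Icc]
    constructor
    · rintro ⟨⟨hj1, _⟩, hj2⟩
      exact ⟨hj1, (lt_cnt_iff l hj1 i).mp hj2⟩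
    · rintro ⟨hj1, hj2⟩
      have hpN : l.parts i ≤ N := le_trans (l.antitone (Nat.zero_le i)) hl
      exact ⟨⟨hj1, by omega⟩, (lt_cnt_iff l hj1 i).mpr hj2⟩
  rw [this, Nat.card_Icc]
  omega

lemma intPartition_ext {l l' : IntPartition} (h : l.parts = l'.parts) : l = l' := by
  cases l; cases l'
  simp_all

end BouletAux

namespace BouletAux
open Finset

/-- the strict component of the splitting. -/
noncomputable def gmuP (N : ℕ) (l : IntPartition) : IntPartition := mk N (cmu l N)
/-- the even-multiplicity component of the splitting. -/
noncomputable def gnuP (N : ℕ) (l : IntPartition) : IntPartition := mk N (cnu l N)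

lemma cnt_gmu (N : ℕ) (l : IntPartition) {k : ℕ} (hk : 1 ≤ k) :
    cnt (gmuP N l) k = cmu l N k :=
  mk_cnt N _ (cmu_mono l N) (cmu_zero l N) hk

lemma cnt_gnu (N : ℕ) (l : IntPartition) {k : ℕ} (hk : 1 ≤ k) :
    cnt (gnuP N l) k = cnu l N k :=
  mk_cnt N _ (cnu_mono l N) (cnu_zero l N) hk

lemma gmu_strict (N : ℕ) (l : IntPartition) : (gmuP N l).Strict := by
  intro i hne
  set p := (gmuP N l).parts (i + 1) with hp
  have hp1 : 1 ≤ p := Nat.one_le_iff_ne_zero.mpr hne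
  have h1 : i + 1 < cnt (gmuP N l) p := (lt_cnt_iff _ hp1 _).mpr (by rw [← hp])
  rw [cnt_gmu N l hp1] at h1
  have h2 : cmu l N p ≤ cmu l N (p + 1) + 1 := cmu_succ_le l N p
  have h3 : i < cmu l N (p + 1) := by omega
  rw [← cnt_gmu N l (k := p + 1) (by omega)] at h3
  have h4 : p + 1 ≤ (gmuP N l).parts i := (lt_cnt_iff _ (by omega) i).mp h3
  omega

lemma gnu_even (N : ℕ) (l : IntPartition) :
    ∀ k, 0 < k → Even (Set.ncard {i | (gnuP N l).parts i = k}) := by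
  intro k hk
  rw [ncard_parts_eq _ hk]
  unfold mlt
  rw [cnt_gnu N l hk, cnt_gnu N l (k := k + 1) (by omega)]
  rcases le_or_gt k N with h | h
  · rw [cnu_split l hk h, Nat.add_sub_cancel]
    exact ⟨mlt l k / 2, by ring⟩
  · rw [cnu_zero l N k h, cnu_zero l N (k + 1) (by omega)]
    simp

end BouletAux

open Finset BouletAux in
theorem boulet_bijection (N : ℕ) (hN : 1 ≤ N) :
    ∃ g : {l : IntPartition // l.parts 0 ≤ N} →
        {m : IntPartition // m.Strict ∧ m.parts 0 ≤ N} ×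
          {e : IntPartition // e.parts 0 ≤ N ∧
            ∀ k, 0 < k → Even (Set.ncard {i : ℕ | e.parts i = k})},
      Function.Bijective g ∧
        ∀ l, l.1.length = (g l).1.1.length + (g l).2.1.length ∧
          l.1.statA = (g l).1.1.statA + (g l).2.1.statA ∧
          l.1.statB = (g l).1.1.statB + (g l).2.1.statB ∧
          l.1.statC = (g l).1.1.statC + (g l).2.1.statC ∧
          l.1.statD = (g l).1.1.statD + (g l).2.1.statD := by
  
  classical
  refine ⟨fun l => (⟨gmuP N l.1, gmu_strict N l.1, mk_parts_le _ _ 0⟩,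
      ⟨gnuP N l.1, mk_parts_le _ _ 0, gnu_even N l.1⟩), ?_, ?_⟩
  · rw [Function.bijective_iff_has_inverse]
    refine ⟨fun p => ⟨mk N (fun k => cnt p.1.1 k + cnt p.2.1 k), mk_parts_le _ _ 0⟩, ?_, ?_⟩
    · -- left inverse
      rintro ⟨l, hl⟩
      apply Subtype.ext
      apply intPartition_ext
      funext i
      show ((Icc 1 N).filter
        (fun k => i < cnt (gmuP N l) k + cnt (gnuP N l) k)).card = l.parts i
      rw [Finset.filter_congr (q := fun k => i < cnt l k) ?_, ← parts_eq l hl i]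
      intro k hk
      simp only [mem_Icc] at hk
      rw [cnt_gmu N l hk.1, cnt_gnu N l hk.1, cmu_add_cnu l hl hk.1]
    · -- right inverse
      rintro ⟨⟨μ, hμs, hμN⟩, ⟨ν, hνN, hνe⟩⟩
      set lam : IntPartition := mk N (fun k => cnt μ k + cnt ν k) with hlam
      have hcnt : ∀ k, 1 ≤ k → cnt lam k = cnt μ k + cnt ν k := by
        intro k hk
        refine mk_cnt N _ (fun j hj => ?_) (fun j hj => ?_) hk
        · exact add_le_add (cnt_mono μ hj (by omega)) (cnt_mono ν hj (by omega))
        · rw [cnt_eq_zero μ (by omega), cnt_eq_zero ν (by omega)]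
      have hmlt : ∀ k, 1 ≤ k → mlt lam k = mlt μ k + mlt ν k := by
        intro k hk
        have e1 := hcnt k hk
        have e2 := hcnt (k + 1) (by omega)
        have e3 := cnt_mono μ hk (by omega : k ≤ k + 1)
        have e4 := cnt_mono ν hk (by omega : k ≤ k + 1)
        unfold mlt
        omega
      have hμ1 : ∀ k, 1 ≤ k → mlt μ k ≤ 1 := fun k hk => strict_mlt hμs hk
      have hν2 : ∀ k, 1 ≤ k → Even (mlt ν k) := by
        intro k hk
        rw [← ncard_parts_eq ν hk]
        exact hνe k hk
      have hcmu : ∀ k, 1 ≤ k → cmu lam N k = cnt μ k := by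
        intro k hk
        unfold cmu
        rw [Finset.card_filter, ← sum_mlt μ hμN hk]
        apply Finset.sum_congr rfl
        intro j hj
        simp only [mem_Icc] at hj
        have hj1 : 1 ≤ j := le_trans hk hj.1
        have e1 := hmlt j hj1
        have e2 := hμ1 j hj1
        obtain ⟨t, ht⟩ := hν2 j hj1
        split_ifs with h <;> omega
      have hcnu : ∀ k, 1 ≤ k → cnu lam N k = cnt ν k := by
        intro k hk
        unfold cnu
        rw [← sum_mlt ν hνN hk]
        apply Finset.sum_congr rfl
        intro j hj
        simp only [mem_Icc] at hj
        have hj1 : 1 ≤ j := le_trans hk hj.1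
        have e1 := hmlt j hj1
        have e2 := hμ1 j hj1
        obtain ⟨t, ht⟩ := hν2 j hj1
        omega
      refine Prod.ext ?_ ?_
      · apply Subtype.ext
        apply intPartition_ext
        funext i
        show ((Icc 1 N).filter (fun k => i < cmu lam N k)).card = μ.parts i
        rw [Finset.filter_congr (q := fun k => i < cnt μ k) ?_, ← parts_eq μ hμN i]
        intro k hk
        simp only [mem_Icc] at hk
        rw [hcmu k hk.1]
      · apply Subtype.ext
        apply intPartition_ext
        funext i
        show ((Icc 1 N).filter (fun k => i < cnu lam N k)).card = ν.parts i
        rw [Finset.filter_congr (q := fun k => i < cnt ν k) ?_, ← parts_eq ν hνN i]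
        intro k hk
        simp only [mem_Icc] at hk
        rw [hcnu k hk.1]
  · rintro ⟨l, hl⟩
    have hμ0 : (gmuP N l).parts 0 ≤ N := mk_parts_le _ _ 0
    have hν0 : (gnuP N l).parts 0 ≤ N := mk_parts_le _ _ 0
    have key : ∀ j, 1 ≤ j →
        cnt l j = cnt (gmuP N l) j + cnt (gnuP N l) j ∧ Even (cnt (gnuP N l) j) := by
      intro j hj
      rw [cnt_gmu N l hj, cnt_gnu N l hj, cmu_add_cnu l hl hj]
      exact ⟨rfl, cnu_even l N j⟩
    refine ⟨?_, ?_, ?_, ?_, ?_⟩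
    · show l.length = _
      rw [length_eq_cnt, length_eq_cnt, length_eq_cnt, (key 1 le_rfl).1]
    · show l.statA = _
      rw [statA_eq l N hl, statA_eq _ N hμ0, statA_eq _ N hν0, ← Finset.sum_add_distrib]
      apply Finset.sum_congr rfl
      intro j hj
      simp only [mem_filter, mem_Icc] at hj
      obtain ⟨e1, e2⟩ := key j hj.1.1
      obtain ⟨t, ht⟩ := e2
      omega
    · show l.statB = _
      rw [statB_eq l N hl, statB_eq _ N hμ0, statB_eq _ N hν0, ← Finset.sum_add_distrib]
      apply Finset.sum_congr rfl
      intro j hj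
      simp only [mem_filter, mem_Icc] at hj
      obtain ⟨e1, e2⟩ := key j hj.1.1
      obtain ⟨t, ht⟩ := e2
      omega
    · show l.statC = _
      rw [statC_eq l N hl, statC_eq _ N hμ0, statC_eq _ N hν0, ← Finset.sum_add_distrib]
      apply Finset.sum_congr rfl
      intro j hj
      simp only [mem_filter, mem_Icc] at hj
      obtain ⟨e1, e2⟩ := key j hj.1.1
      obtain ⟨t, ht⟩ := e2
      omega
    · show l.statD = _
      rw [statD_eq l N hl, statD_eq _ N hμ0, statD_eq _ N hν0, ← Finset.sum_add_distrib]
      apply Finset.sum_congr rfl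
      intro j hj
      simp only [mem_filter, mem_Icc] at hj
      obtain ⟨e1, e2⟩ := key j hj.1.1
      obtain ⟨t, ht⟩ := e2
      omega
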